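/- Fix λ ∈ [0,1] and c₁, c₂, c₃ ∈ [−1,1], set g = √(1−λ²), and let ρ = (1/4)(I₄ + c₁·σ₁⊗σ₁ + c₂·σ₂⊗σ₂ + c₃·σ₃⊗σ₃). For φ ∈ ℝ let ψ(φ) = ψ(π/2,φ), ψ⊥(φ) = ψ⊥(π/2,φ) be the equatorial basis, and let Q₊(φ) = √((1+λ)/2)·ψ(φ)ψ(φ)† + √((1−λ)/2)·ψ⊥(φ)ψ⊥(φ)† and Q₋(φ) = √((1+λ)/2)·ψ⊥(φ)ψ⊥(φ)† + √((1−λ)/2)·ψ(φ)ψ(φ)†. Then the non-selective Lüders update averaged over the equatorial circle satisfies (1/(2π))·∫₀^{2π} [(I₂⊗Q₊(φ))ρ(I₂⊗Q₊(φ)) + (I₂⊗Q₋(φ))ρ(I₂⊗Q₋(φ))] dφ = (1/4)(I₄ + ((1+g)/2)·c₁·σ₁⊗σ₁ + ((1+g)/2)·c₂·σ₂⊗σ₂ + g·c₃·σ₃⊗σ₃). -/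

import Mathlib

open Matrix
open Kronecker

noncomputable section

/-- The equatorial qubit state ψ(π/2,φ). -/
def psiEq (φ : ℝ) : Fin 2 → ℂ :=
  ![(Real.cos (Real.pi/4) : ℂ), Complex.exp (φ * Complex.I) * (Real.sin (Real.pi/4) : ℂ)]

/-- The equatorial qubit state ψ⊥(π/2,φ). -/
def psiPerpEq (φ : ℝ) : Fin 2 → ℂ :=
  ![-(Real.sin (Real.pi/4) : ℂ), Complex.exp (φ * Complex.I) * (Real.cos (Real.pi/4) : ℂ)]

/-- The rank-one matrix u u†. -/
def dyad (u : Fin 2 → ℂ) : Matrix (Fin 2) (Fin 2) ℂ :=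
  Matrix.of fun i j => u i * (starRingEnd ℂ) (u j)

/-- The first Pauli matrix. -/
def sigma1 : Matrix (Fin 2) (Fin 2) ℂ := !![0, 1; 1, 0]

/-- The second Pauli matrix. -/
def sigma2 : Matrix (Fin 2) (Fin 2) ℂ := !![0, -Complex.I; Complex.I, 0]

/-- The third Pauli matrix. -/
def sigma3 : Matrix (Fin 2) (Fin 2) ℂ := !![1, 0; 0, -1]

/-- The Bell-diagonal state with correlation coefficients c₁, c₂, c₃. -/
def bellDiag (c₁ c₂ c₃ : ℝ) : Matrix (Fin 2 × Fin 2) (Fin 2 × Fin 2) ℂ :=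
  ((1/4 : ℝ) : ℂ) • ((1 : Matrix (Fin 2 × Fin 2) (Fin 2 × Fin 2) ℂ)
    + (c₁ : ℂ) • (sigma1 ⊗ₖ sigma1) + (c₂ : ℂ) • (sigma2 ⊗ₖ sigma2)
    + (c₃ : ℂ) • (sigma3 ⊗ₖ sigma3))

/-- Square root of the unsharp effect operator E₊(φ) on the equatorial basis. -/
def sqrtEffPlus (l φ : ℝ) : Matrix (Fin 2) (Fin 2) ℂ :=
  (Real.sqrt ((1+l)/2) : ℂ) • dyad (psiEq φ) + (Real.sqrt ((1-l)/2) : ℂ) • dyad (psiPerpEq φ)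

/-- Square root of the unsharp effect operator E₋(φ) on the equatorial basis. -/
def sqrtEffMinus (l φ : ℝ) : Matrix (Fin 2) (Fin 2) ℂ :=
  (Real.sqrt ((1+l)/2) : ℂ) • dyad (psiPerpEq φ) + (Real.sqrt ((1-l)/2) : ℂ) • dyad (psiEq φ)

/-- The non-selective Lüders update of the Bell-diagonal state. -/
def luders (l c₁ c₂ c₃ φ : ℝ) : Matrix (Fin 2 × Fin 2) (Fin 2 × Fin 2) ℂ :=
  ((1 : Matrix (Fin 2) (Fin 2) ℂ) ⊗ₖ sqrtEffPlus l φ) * bellDiag c₁ c₂ c₃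
      * ((1 : Matrix (Fin 2) (Fin 2) ℂ) ⊗ₖ sqrtEffPlus l φ)
    + ((1 : Matrix (Fin 2) (Fin 2) ℂ) ⊗ₖ sqrtEffMinus l φ) * bellDiag c₁ c₂ c₃
      * ((1 : Matrix (Fin 2) (Fin 2) ℂ) ⊗ₖ sqrtEffMinus l φ)

def Mphi (φ : ℝ) : Matrix (Fin 2) (Fin 2) ℂ :=
  !![0, Complex.exp (-(φ * Complex.I)); Complex.exp (φ * Complex.I), 0]

lemma conj_expI (φ : ℝ) : (starRingEnd ℂ) (Complex.exp (φ * Complex.I)) = Complex.exp (-(φ * Complex.I)) := by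
  rw [← Complex.exp_conj]
  congr 1
  simp [Complex.conj_I]


lemma exp_mul_exp_neg (φ : ℝ) :
    Complex.exp (φ * Complex.I) * Complex.exp (-(φ * Complex.I)) = 1 := by
  rw [← Complex.exp_add]; simp

lemma dyad_psiEq (φ : ℝ) :
    dyad (psiEq φ) = (1/2 : ℂ) • ((1 : Matrix (Fin 2) (Fin 2) ℂ) + Mphi φ) := by
  have h2 : ((Real.sqrt 2 : ℝ) : ℂ) * ((Real.sqrt 2 : ℝ) : ℂ) = 2 := by
    norm_cast
    exact Real.mul_self_sqrt (by norm_num)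
  have hzw := exp_mul_exp_neg φ
  ext i j
  fin_cases i <;> fin_cases j <;>
    simp [dyad, psiEq, Mphi, Real.cos_pi_div_four, Real.sin_pi_div_four,
      Matrix.one_apply, _root_.map_mul, conj_expI, Complex.conj_ofReal, map_ofNat]
  · linear_combination h2/4
  · linear_combination (Complex.exp (-(φ * Complex.I))/4) * h2
  · linear_combination (Complex.exp (φ * Complex.I)/4) * h2
  · linear_combination (((Real.sqrt 2 : ℝ) : ℂ) * ((Real.sqrt 2 : ℝ) : ℂ)/4) * hzw + (1/4) * h2

lemma dyad_psiPerpEq (φ : ℝ) :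
    dyad (psiPerpEq φ) = (1/2 : ℂ) • ((1 : Matrix (Fin 2) (Fin 2) ℂ) - Mphi φ) := by
  have h2 : ((Real.sqrt 2 : ℝ) : ℂ) * ((Real.sqrt 2 : ℝ) : ℂ) = 2 := by
    norm_cast
    exact Real.mul_self_sqrt (by norm_num)
  have hzw := exp_mul_exp_neg φ
  ext i j
  fin_cases i <;> fin_cases j <;>
    simp [dyad, psiPerpEq, Mphi, Real.cos_pi_div_four, Real.sin_pi_div_four,
      Matrix.one_apply, _root_.map_mul, conj_expI, Complex.conj_ofReal, map_ofNat]
  · linear_combination h2/4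
  · linear_combination (Complex.exp (-(φ * Complex.I))/4) * h2
  · linear_combination (Complex.exp (φ * Complex.I)/4) * h2
  · linear_combination (((Real.sqrt 2 : ℝ) : ℂ) * ((Real.sqrt 2 : ℝ) : ℂ)/4) * hzw + (1/4) * h2


def e10 : Matrix (Fin 2) (Fin 2) ℂ := !![0,0;1,0]
def e01 : Matrix (Fin 2) (Fin 2) ℂ := !![0,1;0,0]

def z2 (φ : ℝ) : ℂ := Complex.exp ((2*Complex.I) * φ)
def w2 (φ : ℝ) : ℂ := Complex.exp ((-(2*Complex.I)) * φ)

lemma hz2 (φ : ℝ) : Complex.exp (φ * Complex.I) * Complex.exp (φ * Complex.I) = z2 φ := by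
  rw [z2, ← Complex.exp_add]; congr 1; ring

lemma hw2 (φ : ℝ) : Complex.exp (-(φ * Complex.I)) * Complex.exp (-(φ * Complex.I)) = w2 φ := by
  rw [w2, ← Complex.exp_add]; congr 1; ring

lemma hzw (φ : ℝ) : Complex.exp (φ * Complex.I) * Complex.exp (-(φ * Complex.I)) = 1 := by
  rw [← Complex.exp_add]; simp

lemma M_mul_M (φ : ℝ) : Mphi φ * Mphi φ = 1 := by
  ext i j
  fin_cases i <;> fin_cases j <;>
    simp [Mphi, Matrix.mul_apply, Fin.sum_univ_succ, Matrix.one_apply, ← Complex.exp_add]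

lemma M1M (φ : ℝ) : Mphi φ * (sigma1 * Mphi φ) = z2 φ • e10 + w2 φ • e01 := by
  ext i j
  fin_cases i <;> fin_cases j <;>
    simp [Mphi, sigma1, e10, e01, Matrix.mul_apply, Fin.sum_univ_succ, hz2, hw2]

lemma M2M (φ : ℝ) : Mphi φ * (sigma2 * Mphi φ)
    = (-(Complex.I) * z2 φ) • e10 + (Complex.I * w2 φ) • e01 := by
  ext i j
  fin_cases i <;> fin_cases j <;>
    simp [Mphi, sigma2, e10, e01, Matrix.mul_apply, Fin.sum_univ_succ]
  · linear_combination Complex.I * hw2 φ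
  · linear_combination Complex.I * hz2 φ

lemma M3M (φ : ℝ) : Mphi φ * (sigma3 * Mphi φ) = -sigma3 := by
  ext i j
  fin_cases i <;> fin_cases j <;>
    simp [Mphi, sigma3, Matrix.mul_apply, Fin.sum_univ_succ]
  · linear_combination hzw φ
  · linear_combination hzw φ

lemma expand_sym {n : Type*} [Fintype n] [DecidableEq n]
    (A B : Matrix n n ℂ) (a b : ℂ) :
    ((a • (1 : Matrix n n ℂ) + b • B) * A) * (a • (1 : Matrix n n ℂ) + b • B)
      + ((a • (1 : Matrix n n ℂ) - b • B) * A) * (a • (1 : Matrix n n ℂ) - b • B)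
    = (2*a^2) • A + (2*b^2) • (B * (A * B)) := by
  simp only [add_mul, mul_add, sub_mul, mul_sub, smul_mul_assoc, mul_smul_comm,
    smul_smul, Matrix.one_mul, Matrix.mul_one, mul_assoc]
  module

def alphaL (l : ℝ) : ℝ := (Real.sqrt ((1+l)/2) + Real.sqrt ((1-l)/2)) / 2
def betaL (l : ℝ) : ℝ := (Real.sqrt ((1+l)/2) - Real.sqrt ((1-l)/2)) / 2

lemma sqrtEffPlus_eq (l φ : ℝ) :
    sqrtEffPlus l φ = ((alphaL l : ℝ) : ℂ) • (1 : Matrix (Fin 2) (Fin 2) ℂ)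
      + ((betaL l : ℝ) : ℂ) • Mphi φ := by
  rw [sqrtEffPlus, dyad_psiEq, dyad_psiPerpEq, alphaL, betaL]
  push_cast
  module

lemma sqrtEffMinus_eq (l φ : ℝ) :
    sqrtEffMinus l φ = ((alphaL l : ℝ) : ℂ) • (1 : Matrix (Fin 2) (Fin 2) ℂ)
      - ((betaL l : ℝ) : ℂ) • Mphi φ := by
  rw [sqrtEffMinus, dyad_psiEq, dyad_psiPerpEq, alphaL, betaL]
  push_cast
  module

lemma two_alpha_sq (l : ℝ) (hl : l ∈ Set.Icc (0:ℝ) 1) :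
    2 * (alphaL l)^2 = (1 + Real.sqrt (1 - l^2)) / 2 := by
  obtain ⟨h0, h1⟩ := hl
  have ha : (0:ℝ) ≤ (1+l)/2 := by linarith
  have hb : (0:ℝ) ≤ (1-l)/2 := by linarith
  have hab : Real.sqrt ((1+l)/2) * Real.sqrt ((1-l)/2) = Real.sqrt (1 - l^2) / 2 := by
    rw [← Real.sqrt_mul ha]
    rw [show (1+l)/2 * ((1-l)/2) = (1 - l^2) * (1/2)^2 by ring]
    rw [Real.sqrt_mul (by nlinarith), Real.sqrt_sq (by norm_num)]
    ring
  have hsa : Real.sqrt ((1+l)/2) ^ 2 = (1+l)/2 := Real.sq_sqrt ha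
  have hsb : Real.sqrt ((1-l)/2) ^ 2 = (1-l)/2 := Real.sq_sqrt hb
  rw [alphaL]
  nlinarith [hsa, hsb, hab]

lemma two_beta_sq (l : ℝ) (hl : l ∈ Set.Icc (0:ℝ) 1) :
    2 * (betaL l)^2 = (1 - Real.sqrt (1 - l^2)) / 2 := by
  obtain ⟨h0, h1⟩ := hl
  have ha : (0:ℝ) ≤ (1+l)/2 := by linarith
  have hb : (0:ℝ) ≤ (1-l)/2 := by linarith
  have hab : Real.sqrt ((1+l)/2) * Real.sqrt ((1-l)/2) = Real.sqrt (1 - l^2) / 2 := by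
    rw [← Real.sqrt_mul ha]
    rw [show (1+l)/2 * ((1-l)/2) = (1 - l^2) * (1/2)^2 by ring]
    rw [Real.sqrt_mul (by nlinarith), Real.sqrt_sq (by norm_num)]
    ring
  have hsa : Real.sqrt ((1+l)/2) ^ 2 = (1+l)/2 := Real.sq_sqrt ha
  have hsb : Real.sqrt ((1-l)/2) ^ 2 = (1-l)/2 := Real.sq_sqrt hb
  rw [betaL]
  nlinarith [hsa, hsb, hab]

def Bmat (l c₁ c₂ : ℝ) : Matrix (Fin 2 × Fin 2) (Fin 2 × Fin 2) ℂ :=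
  (((1 - Real.sqrt (1 - l^2))/8 : ℝ) : ℂ) •
    ((c₁ : ℂ) • (sigma1 ⊗ₖ e10) + (-(c₂ : ℂ) * Complex.I) • (sigma2 ⊗ₖ e10))

def Cmat (l c₁ c₂ : ℝ) : Matrix (Fin 2 × Fin 2) (Fin 2 × Fin 2) ℂ :=
  (((1 - Real.sqrt (1 - l^2))/8 : ℝ) : ℂ) •
    ((c₁ : ℂ) • (sigma1 ⊗ₖ e01) + ((c₂ : ℂ) * Complex.I) • (sigma2 ⊗ₖ e01))

lemma luders_decomp (l c₁ c₂ c₃ : ℝ) (hl : l ∈ Set.Icc (0:ℝ) 1) (φ : ℝ) :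
    luders l c₁ c₂ c₃ φ
      = bellDiag (((1 + Real.sqrt (1 - l^2))/2) * c₁)
          (((1 + Real.sqrt (1 - l^2))/2) * c₂)
          (Real.sqrt (1 - l^2) * c₃)
        + z2 φ • Bmat l c₁ c₂ + w2 φ • Cmat l c₁ c₂ := by
  have hkp : (1 : Matrix (Fin 2) (Fin 2) ℂ) ⊗ₖ sqrtEffPlus l φ
      = ((alphaL l : ℝ) : ℂ) • (1 : Matrix (Fin 2 × Fin 2) (Fin 2 × Fin 2) ℂ)
        + ((betaL l : ℝ) : ℂ) • ((1 : Matrix (Fin 2) (Fin 2) ℂ) ⊗ₖ Mphi φ) := by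
    rw [sqrtEffPlus_eq, Matrix.kronecker_add, Matrix.kronecker_smul, Matrix.kronecker_smul,
      Matrix.one_kronecker_one]
  have hkm : (1 : Matrix (Fin 2) (Fin 2) ℂ) ⊗ₖ sqrtEffMinus l φ
      = ((alphaL l : ℝ) : ℂ) • (1 : Matrix (Fin 2 × Fin 2) (Fin 2 × Fin 2) ℂ)
        - ((betaL l : ℝ) : ℂ) • ((1 : Matrix (Fin 2) (Fin 2) ℂ) ⊗ₖ Mphi φ) := by
    rw [sqrtEffMinus_eq, sub_eq_add_neg, ← neg_smul, Matrix.kronecker_add,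
      Matrix.kronecker_smul, Matrix.kronecker_smul, Matrix.one_kronecker_one,
      neg_smul, ← sub_eq_add_neg]
  set N : Matrix (Fin 2 × Fin 2) (Fin 2 × Fin 2) ℂ := (1 : Matrix (Fin 2) (Fin 2) ℂ) ⊗ₖ Mphi φ with hN
  have hNN : N * N = 1 := by
    rw [hN, ← Matrix.mul_kronecker_mul, Matrix.one_mul, M_mul_M, Matrix.one_kronecker_one]
  have hcon : ∀ S T : Matrix (Fin 2) (Fin 2) ℂ,
      N * ((S ⊗ₖ T) * N) = S ⊗ₖ (Mphi φ * (T * Mphi φ)) := by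
    intro S T
    rw [hN, ← Matrix.mul_kronecker_mul, ← Matrix.mul_kronecker_mul, Matrix.one_mul, Matrix.mul_one]
  have hNρN : N * (bellDiag c₁ c₂ c₃ * N)
      = ((1/4 : ℝ) : ℂ) • ((1 : Matrix (Fin 2 × Fin 2) (Fin 2 × Fin 2) ℂ)
          + (c₁ : ℂ) • (sigma1 ⊗ₖ (z2 φ • e10 + w2 φ • e01))
          + (c₂ : ℂ) • (sigma2 ⊗ₖ ((-(Complex.I) * z2 φ) • e10 + (Complex.I * w2 φ) • e01))
          + (-(c₃ : ℂ)) • (sigma3 ⊗ₖ sigma3)) := by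
    rw [bellDiag]
    simp only [smul_mul_assoc, mul_smul_comm, Matrix.add_mul, Matrix.mul_add, Matrix.one_mul]
    rw [hNN, hcon sigma1 sigma1, hcon sigma2 sigma2, hcon sigma3 sigma3, M1M, M2M, M3M,
      show -sigma3 = (-1 : ℂ) • sigma3 from (neg_one_smul ℂ sigma3).symm, Matrix.kronecker_smul]
    module
  rw [luders, hkp, hkm, expand_sym, hNρN]
  have h2a : ((2 : ℂ) * ((alphaL l : ℝ) : ℂ)^2) = (((1 + Real.sqrt (1 - l^2)) / 2 : ℝ) : ℂ) := by
    rw [← two_alpha_sq l hl]; push_cast; ring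
  have h2b : ((2 : ℂ) * ((betaL l : ℝ) : ℂ)^2) = (((1 - Real.sqrt (1 - l^2)) / 2 : ℝ) : ℂ) := by
    rw [← two_beta_sq l hl]; push_cast; ring
  rw [h2a, h2b, bellDiag, bellDiag, Bmat, Cmat]
  simp only [Matrix.kronecker_add, Matrix.kronecker_smul]
  push_cast
  module


theorem averaged_luders_update (l c₁ c₂ c₃ : ℝ) (hl : l ∈ Set.Icc (0:ℝ) 1)
    (hc₁ : c₁ ∈ Set.Icc (-1:ℝ) 1) (hc₂ : c₂ ∈ Set.Icc (-1:ℝ) 1)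
    (hc₃ : c₃ ∈ Set.Icc (-1:ℝ) 1) :
    ∀ p q : Fin 2 × Fin 2,
      ((1 / (2 * Real.pi) : ℝ) : ℂ)
          * ∫ φ in (0:ℝ)..(2 * Real.pi), luders l c₁ c₂ c₃ φ p q
        = bellDiag (((1 + Real.sqrt (1 - l^2))/2) * c₁)
            (((1 + Real.sqrt (1 - l^2))/2) * c₂)
            (Real.sqrt (1 - l^2) * c₃) p q := by
  intro p q
  set T : ℂ := bellDiag (((1 + Real.sqrt (1 - l^2))/2) * c₁)
      (((1 + Real.sqrt (1 - l^2))/2) * c₂) (Real.sqrt (1 - l^2) * c₃) p q with hT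
  set B : ℂ := Bmat l c₁ c₂ p q with hB
  set C : ℂ := Cmat l c₁ c₂ p q with hC
  have hfun : ∀ φ : ℝ, luders l c₁ c₂ c₃ φ p q
      = T + B * Complex.exp ((2*Complex.I) * φ) + C * Complex.exp ((-(2*Complex.I)) * φ) := by
    intro φ
    rw [luders_decomp l c₁ c₂ c₃ hl φ]
    simp [Matrix.add_apply, Matrix.smul_apply, z2, w2, smul_eq_mul, hT, hB, hC]
    ring
  have hi1 : IntervalIntegrable (fun φ : ℝ => B * Complex.exp ((2*Complex.I) * φ))
      MeasureTheory.volume 0 (2*Real.pi) := by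
    apply Continuous.intervalIntegrable
    exact continuous_const.mul (Complex.continuous_exp.comp (continuous_const.mul Complex.continuous_ofReal))
  have hi2 : IntervalIntegrable (fun φ : ℝ => C * Complex.exp ((-(2*Complex.I)) * φ))
      MeasureTheory.volume 0 (2*Real.pi) := by
    apply Continuous.intervalIntegrable
    exact continuous_const.mul (Complex.continuous_exp.comp (continuous_const.mul Complex.continuous_ofReal))
  have hic : IntervalIntegrable (fun _ : ℝ => T) MeasureTheory.volume 0 (2*Real.pi) :=
    intervalIntegrable_const
  rw [intervalIntegral.integral_congr (g := fun φ : ℝ =>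
      T + B * Complex.exp ((2*Complex.I) * φ) + C * Complex.exp ((-(2*Complex.I)) * φ))
      (fun φ _ => hfun φ)]
  rw [intervalIntegral.integral_add (hic.add hi1) hi2, intervalIntegral.integral_add hic hi1,
    intervalIntegral.integral_const, intervalIntegral.integral_const_mul,
    intervalIntegral.integral_const_mul,
    integral_exp_mul_complex (by simp [Complex.I_ne_zero] : (2*Complex.I : ℂ) ≠ 0),
    integral_exp_mul_complex (by simp [Complex.I_ne_zero] : (-(2*Complex.I) : ℂ) ≠ 0)]
  have he1 : Complex.exp ((2*Complex.I) * ((2*Real.pi : ℝ) : ℂ)) = 1 := by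
    rw [show (2*Complex.I) * ((2*Real.pi : ℝ) : ℂ) = ((2:ℤ) : ℂ) * (2*Real.pi*Complex.I) by
      push_cast; ring]
    exact Complex.exp_int_mul_two_pi_mul_I 2
  have he2 : Complex.exp ((-(2*Complex.I)) * ((2*Real.pi : ℝ) : ℂ)) = 1 := by
    rw [show (-(2*Complex.I)) * ((2*Real.pi : ℝ) : ℂ) = ((-2:ℤ) : ℂ) * (2*Real.pi*Complex.I) by
      push_cast; ring]
    exact Complex.exp_int_mul_two_pi_mul_I (-2)
  simp only [he1, he2, sub_self, zero_div, mul_zero, add_zero]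
  rw [Complex.real_smul]
  push_cast
  have hπ : (Real.pi : ℂ) ≠ 0 := by exact_mod_cast Real.pi_ne_zero
  field_simp
  simp only [mul_zero, zero_mul, neg_zero, Complex.exp_zero, sub_self, sub_zero, add_zero]
  ring

end
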